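/- Let f be a holomorphic function on the upper half-plane, γ = [[a,b],[c,d]] ∈ SL₂(ℝ), k an integer, and m ≥ 0. Then ((D^m f)|_{k+2m} γ)(τ) = Σ_{r=0}^m C(m,r)·(k+r)_{m-r}·((1/(2πi))·c/(cτ+d))^{m-r}·(D^r(f|_k γ))(τ). -/

import Mathlib

open Complex Finset

noncomputable section

/-- The normalized derivative `D = (2πi)⁻¹ d/dτ`. -/
def Dop (f : ℂ → ℂ) : ℂ → ℂ := fun τ => (2 * ↑Real.pi * I)⁻¹ * deriv f τ

/-- Rising factorial `x (x+1) ⋯ (x+n-1)` for complex `x`. -/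
def risingC (x : ℂ) (n : ℕ) : ℂ := ∏ i ∈ Finset.range n, (x + i)

/-- Weight `k` slash action of `γ = [[a,b],[c,d]]` on functions of the upper half-plane. -/
def slash (k : ℤ) (a b c d : ℝ) (f : ℂ → ℂ) : ℂ → ℂ :=
  fun τ => ((c : ℂ) * τ + (d : ℂ)) ^ (-k) * f (((a : ℂ) * τ + (b : ℂ)) / ((c : ℂ) * τ + (d : ℂ)))

lemma isOpen_U : IsOpen {z : ℂ | 0 < z.im} := isOpen_lt continuous_const Complex.continuous_im

lemma den_ne {a b c d : ℝ} (hdet : a * d - b * c = 1) {τ : ℂ} (hτ : 0 < τ.im) :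
    (c : ℂ) * τ + d ≠ 0 := by
  rcases eq_or_ne c 0 with hc | hc
  · have hd : d ≠ 0 := by rintro rfl; rw [hc] at hdet; simp at hdet
    simp [hc, hd]
  · intro h
    have him : ((c : ℂ) * τ + d).im = c * τ.im := by simp
    rw [h] at him
    simp only [Complex.zero_im] at him
    rcases mul_eq_zero.1 him.symm with h' | h'
    · exact hc h'
    · exact hτ.ne' h'

lemma im_moeb {a b c d : ℝ} (hdet : a * d - b * c = 1) {τ : ℂ} (hτ : 0 < τ.im) :
    ((((a : ℂ) * τ + b) / ((c : ℂ) * τ + d)).im) = τ.im / normSq ((c : ℂ) * τ + d) := by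
  have hne := den_ne hdet hτ
  have hns : normSq ((c : ℂ) * τ + d) ≠ 0 := by
    simpa [Complex.normSq_eq_zero] using hne
  rw [Complex.div_im, ← sub_div]
  congr 1
  simp only [Complex.add_im, Complex.add_re, Complex.mul_im, Complex.mul_re,
    Complex.ofReal_re, Complex.ofReal_im]
  nlinarith [hdet]

lemma moeb_mem {a b c d : ℝ} (hdet : a * d - b * c = 1) {τ : ℂ} (hτ : 0 < τ.im) :
    0 < ((((a : ℂ) * τ + b) / ((c : ℂ) * τ + d)).im) := by
  rw [im_moeb hdet hτ]
  have := Complex.normSq_pos.2 (den_ne hdet hτ)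
  positivity

lemma den_hasDeriv (c d : ℝ) (τ : ℂ) :
    HasDerivAt (fun z : ℂ => (c : ℂ) * z + d) (c : ℂ) τ := by
  simpa using ((hasDerivAt_id τ).const_mul (c : ℂ)).add_const (d : ℂ)

lemma moeb_hasDeriv {a b c d : ℝ} (hdet : a * d - b * c = 1) {τ : ℂ} (hτ : 0 < τ.im) :
    HasDerivAt (fun z : ℂ => ((a : ℂ) * z + b) / ((c : ℂ) * z + d))
      ((((c : ℂ) * τ + d) ^ 2)⁻¹) τ := by
  have hne := den_ne hdet hτ
  have hnum : HasDerivAt (fun z : ℂ => (a : ℂ) * z + b) (a : ℂ) τ := by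
    simpa using ((hasDerivAt_id τ).const_mul (a : ℂ)).add_const (b : ℂ)
  have h := hnum.div (den_hasDeriv c d τ) hne
  refine h.congr_deriv ?_
  have hdetC : (a : ℂ) * d - b * c = 1 := by exact_mod_cast hdet
  rw [show ((a:ℂ) * ((c:ℂ)*τ+d) - ((a:ℂ)*τ+b)*(c:ℂ)) = 1 by linear_combination hdetC, one_div]

lemma slash_hasDerivAt {f : ℂ → ℂ} (hf : DifferentiableOn ℂ f {z : ℂ | 0 < z.im})
    {a b c d : ℝ} (hdet : a * d - b * c = 1) (w : ℤ) {τ : ℂ} (hτ : 0 < τ.im) :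
    HasDerivAt (slash w a b c d f)
      ((-w) * ((c:ℂ) * τ + d) ^ (-w - 1) * c *
          f (((a:ℂ) * τ + b) / ((c:ℂ) * τ + d)) +
        ((c:ℂ) * τ + d) ^ (-w) *
          (deriv f (((a:ℂ) * τ + b) / ((c:ℂ) * τ + d)) * ((((c:ℂ) * τ + d) ^ 2)⁻¹))) τ := by
  have hne := den_ne hdet hτ
  have h2 : HasDerivAt (fun z : ℂ => ((c:ℂ) * z + d) ^ (-w))
      (((-w : ℤ) : ℂ) * ((c:ℂ) * τ + d) ^ (-w - 1) * c) τ := by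
    have := (hasDerivAt_zpow (-w) ((c:ℂ) * τ + d) (Or.inl hne)).comp τ (den_hasDeriv c d τ)
    simpa [mul_assoc, Function.comp_def] using this
  have h3 : DifferentiableAt ℂ f (((a:ℂ) * τ + b) / ((c:ℂ) * τ + d)) :=
    hf.differentiableAt (isOpen_U.mem_nhds (moeb_mem hdet hτ))
  have h4 : HasDerivAt (fun z : ℂ => f (((a:ℂ) * z + b) / ((c:ℂ) * z + d)))
      (deriv f (((a:ℂ) * τ + b) / ((c:ℂ) * τ + d)) * ((((c:ℂ) * τ + d) ^ 2)⁻¹)) τ :=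
    h3.hasDerivAt.comp τ (moeb_hasDeriv hdet hτ)
  have h5 := h2.mul h4
  refine h5.congr_deriv ?_
  push_cast
  ring

lemma slash_diffOn {f : ℂ → ℂ} (hf : DifferentiableOn ℂ f {z : ℂ | 0 < z.im})
    {a b c d : ℝ} (hdet : a * d - b * c = 1) (w : ℤ) :
    DifferentiableOn ℂ (slash w a b c d f) {z : ℂ | 0 < z.im} := fun τ hτ =>
  ((slash_hasDerivAt hf hdet w hτ).differentiableAt).differentiableWithinAt

lemma Dop_diffOn {g : ℂ → ℂ} (hg : DifferentiableOn ℂ g {z : ℂ | 0 < z.im}) :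
    DifferentiableOn ℂ (Dop g) {z : ℂ | 0 < z.im} :=
  (((hg.analyticOnNhd isOpen_U).deriv).differentiableOn).const_mul _

lemma iter_Dop_diffOn {g : ℂ → ℂ} (hg : DifferentiableOn ℂ g {z : ℂ | 0 < z.im}) (r : ℕ) :
    DifferentiableOn ℂ (Dop^[r] g) {z : ℂ | 0 < z.im} := by
  induction r with
  | zero => exact hg
  | succ r ih => rw [Function.iterate_succ_apply']; exact Dop_diffOn ih

lemma slash_D {g : ℂ → ℂ} (hg : DifferentiableOn ℂ g {z : ℂ | 0 < z.im})
    {a b c d : ℝ} (hdet : a * d - b * c = 1) (w : ℤ) {τ : ℂ} (hτ : 0 < τ.im) :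
    slash (w + 2) a b c d (Dop g) τ =
      Dop (slash w a b c d g) τ +
        (w : ℂ) * ((1 / (2 * ↑Real.pi * I)) * ((c:ℂ) / ((c:ℂ) * τ + d))) *
          slash w a b c d g τ := by
  have hne := den_ne hdet hτ
  have hd : deriv (slash w a b c d g) τ = _ := (slash_hasDerivAt hg hdet w hτ).deriv
  simp only [Dop, slash, hd]
  rw [show -(w + 2) = -w + (-2 : ℤ) by ring, zpow_add₀ hne, zpow_sub_one₀ hne]
  rw [show ((c:ℂ) * τ + d) ^ (-2 : ℤ) = ((((c:ℂ) * τ + d) ^ 2)⁻¹) by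
    rw [zpow_neg]; norm_cast]
  have hπ : (2 * (Real.pi : ℂ) * I) ≠ 0 := by
    simp [Real.pi_ne_zero, Complex.I_ne_zero]
  set t := (c:ℂ) * τ + d with htdef
  set u := t ^ (-w) with hudef
  set G := g (((a:ℂ) * τ + b) / t) with hGdef
  set Dg := deriv g (((a:ℂ) * τ + b) / t) with hDgdef
  clear_value t u G Dg
  field_simp
  ring


lemma term_hasDerivAt {G : ℂ → ℂ} (c d : ℝ) {τ : ℂ} (hne : (c:ℂ) * τ + d ≠ 0)
    (hG : DifferentiableAt ℂ G τ) (A : ℂ) (n : ℕ) :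
    HasDerivAt (fun z => A * ((1 / (2 * ↑Real.pi * I)) * ((c:ℂ) / ((c:ℂ) * z + d))) ^ n * G z)
      ((A * ((n:ℂ) * ((1 / (2 * ↑Real.pi * I)) * ((c:ℂ) / ((c:ℂ) * τ + d))) ^ (n - 1) *
          ((1 / (2 * ↑Real.pi * I)) * ((0 * ((c:ℂ) * τ + d) - (c:ℂ) * (c:ℂ)) / ((c:ℂ) * τ + d) ^ 2)))) * G τ +
        (A * ((1 / (2 * ↑Real.pi * I)) * ((c:ℂ) / ((c:ℂ) * τ + d))) ^ n) * deriv G τ) τ := by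
  have hW : HasDerivAt (fun z : ℂ => (1 / (2 * ↑Real.pi * I)) * ((c:ℂ) / ((c:ℂ) * z + d)))
      ((1 / (2 * ↑Real.pi * I)) * ((0 * ((c:ℂ) * τ + d) - (c:ℂ) * (c:ℂ)) / ((c:ℂ) * τ + d) ^ 2)) τ :=
    ((hasDerivAt_const τ (c:ℂ)).div (den_hasDeriv c d τ) hne).const_mul _
  exact ((hW.pow n).const_mul A).mul hG.hasDerivAt

lemma Dop_term {G : ℂ → ℂ} (c d : ℝ) {τ : ℂ} (hne : (c:ℂ) * τ + d ≠ 0)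
    (hG : DifferentiableAt ℂ G τ) (A : ℂ) (n : ℕ) :
    Dop (fun z => A * ((1 / (2 * ↑Real.pi * I)) * ((c:ℂ) / ((c:ℂ) * z + d))) ^ n * G z) τ
      = A * (-(n:ℂ)) * ((1 / (2 * ↑Real.pi * I)) * ((c:ℂ) / ((c:ℂ) * τ + d))) ^ (n + 1) * G τ +
        A * ((1 / (2 * ↑Real.pi * I)) * ((c:ℂ) / ((c:ℂ) * τ + d))) ^ n * Dop G τ := by
  have hπ : (2 * (Real.pi : ℂ) * I) ≠ 0 := by
    simp [Real.pi_ne_zero, Complex.I_ne_zero]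
  have hder := (term_hasDerivAt c d hne hG A n).deriv
  simp only [Dop, hder]
  set t := (c:ℂ) * τ + d with htdef
  set Dg := deriv G τ with hDgdef
  set Gv := G τ with hGvdef
  clear_value t Dg Gv
  cases n with
  | zero => simp; ring
  | succ n =>
    set W := (1 / (2 * (Real.pi:ℂ) * I)) * ((c:ℂ) / t) with hWdef
    have hsq : (2 * (Real.pi:ℂ) * I)⁻¹ *
        ((1 / (2 * (Real.pi:ℂ) * I)) * ((0 * t - (c:ℂ) * (c:ℂ)) / t ^ 2)) = -(W ^ 2) := by
      rw [hWdef]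
      field_simp
      ring
    push_cast
    linear_combination (A * ((n:ℂ) + 1) * W ^ n * Gv) * hsq

lemma risingC_zero (x : ℂ) : risingC x 0 = 1 := by simp [risingC]

lemma risingC_succ (x : ℂ) (n : ℕ) : risingC x (n + 1) = risingC x n * (x + n) := by
  simp [risingC, Finset.prod_range_succ]

lemma risingC_succ' (x : ℂ) (n : ℕ) : risingC x (n + 1) = x * risingC (x + 1) n := by
  rw [risingC, Finset.prod_range_succ']
  simp only [Nat.cast_zero, add_zero]
  rw [risingC, mul_comm]
  congr 1
  refine Finset.prod_congr rfl fun i _ => ?_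
  push_cast
  ring

lemma comb (K x : ℂ) (y : ℕ → ℂ) (m : ℕ) :
    (∑ r ∈ Finset.range (m + 1), (m.choose r : ℂ) * risingC (K + r) (m - r) *
        ((K + 2 * m) - ((m - r : ℕ) : ℂ)) * x ^ (m - r + 1) * y r)
      + ∑ r ∈ Finset.range (m + 1), (m.choose r : ℂ) * risingC (K + r) (m - r) *
        x ^ (m - r) * y (r + 1)
    = ∑ r ∈ Finset.range (m + 1 + 1), (((m + 1).choose r : ℂ)) * risingC (K + r) (m + 1 - r) *
        x ^ (m + 1 - r) * y r := by
  conv_rhs => rw [Finset.sum_range_succ' _ (m + 1)]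
  conv_lhs => rw [Finset.sum_range_succ' _ m]
  have h0 : ((m.choose 0 : ℂ)) * risingC (K + (0:ℕ)) (m - 0) * ((K + 2 * m) - ((m - 0 : ℕ) : ℂ)) *
        x ^ (m - 0 + 1) * y 0
      = (((m + 1).choose 0 : ℂ)) * risingC (K + (0:ℕ)) (m + 1 - 0) * x ^ (m + 1 - 0) * y 0 := by
    simp only [Nat.choose_zero_right, Nat.cast_one, Nat.sub_zero, Nat.cast_zero, add_zero]
    rw [risingC_succ]
    ring
  rw [h0]
  have hext : (∑ r ∈ Finset.range m, (m.choose (r+1) : ℂ) * risingC (K + ((r+1):ℕ)) (m - (r+1)) *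
        ((K + 2 * m) - ((m - (r+1) : ℕ) : ℂ)) * x ^ (m - (r+1) + 1) * y (r+1))
      = ∑ r ∈ Finset.range (m+1), (m.choose (r+1) : ℂ) * risingC (K + ((r+1):ℕ)) (m - (r+1)) *
        ((K + 2 * m) - ((m - (r+1) : ℕ) : ℂ)) * x ^ (m - (r+1) + 1) * y (r+1) := by
    rw [Finset.sum_range_succ]
    simp [Nat.choose_succ_self]
  rw [hext, add_right_comm]
  congr 1
  rw [← Finset.sum_add_distrib]
  refine Finset.sum_congr rfl fun r hr => ?_
  have hr' : r ≤ m := Nat.lt_succ_iff.1 (Finset.mem_range.1 hr)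
  rcases eq_or_lt_of_le hr' with rfl | hrm
  · simp [Nat.choose_succ_self, Nat.choose_self, risingC_zero, Nat.sub_self]
  · -- r < m
    have e1 : m - (r+1) = (m - r - 1) := by omega
    have e2 : m - r = (m - r - 1) + 1 := by omega
    have e3 : m + 1 - (r + 1) = (m - r - 1) + 1 := by omega
    have e4 : m - (r + 1) + 1 = (m - r - 1) + 1 := by omega
    have e5 : m + 1 - (r+1) = m - r := by omega
    rw [e1, e3]
    conv_lhs => rw [e2]
    rw [risingC_succ']
    rw [risingC_succ]
    rw [show (((r + 1 : ℕ)) : ℂ) = (r : ℂ) + 1 by push_cast; ring]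
    rw [show K + ((r : ℂ) + 1) = K + (r : ℂ) + 1 by ring]
    have e6 : ((m - r - 1 : ℕ) : ℂ) = (m : ℂ) - (r : ℂ) - 1 := by
      have h' : (m - r - 1 : ℕ) = m - (r + 1) := by omega
      rw [h', Nat.cast_sub (by omega : r + 1 ≤ m)]
      push_cast
      ring
    simp only [Nat.add_sub_cancel]
    rw [e6]
    have hps : (((m + 1).choose (r + 1) : ℂ)) = (m.choose r : ℂ) + (m.choose (r + 1) : ℂ) := by
      rw [Nat.choose_succ_succ]
      push_cast
      ring
    have hid : ((m.choose (r + 1) : ℂ)) * ((r : ℂ) + 1) = (m.choose r : ℂ) * ((m : ℂ) - (r : ℂ)) := by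
      have h' := Nat.choose_succ_right_eq m r
      have hc : ((m.choose (r + 1) * (r + 1) : ℕ) : ℂ) = ((m.choose r * (m - r) : ℕ) : ℂ) := by
        exact_mod_cast congrArg (Nat.cast : ℕ → ℂ) h'
      push_cast [Nat.cast_sub hr'] at hc
      exact hc
    linear_combination (risingC (K + (r : ℂ) + 1) (m - r - 1) * x ^ (m - r - 1 + 1) * y (r + 1)) * hid
      - ((K + (m : ℂ)) * risingC (K + (r : ℂ) + 1) (m - r - 1) * x ^ (m - r - 1 + 1) * y (r + 1)) * hps

set_option maxHeartbeats 4000000 in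
/-- For holomorphic `f` on the upper half-plane, `γ ∈ SL₂(ℝ)`, `k ∈ ℤ`, `m ≥ 0`,
`((D^m f)|_{k+2m} γ)(τ) = Σ_{r=0}^m C(m,r)·(k+r)_{m-r}·((1/(2πi))·c/(cτ+d))^{m-r}·(D^r(f|_k γ))(τ)`. -/
theorem statement2 (f : ℂ → ℂ) (hf : DifferentiableOn ℂ f {z : ℂ | 0 < z.im})
    (a b c d : ℝ) (hdet : a * d - b * c = 1) (k : ℤ) (m : ℕ) (τ : ℂ) (hτ : 0 < τ.im) :
    slash (k + 2 * m) a b c d (Dop^[m] f) τ =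
      ∑ r ∈ Finset.range (m + 1),
        (m.choose r : ℂ) * risingC ((k : ℂ) + (r : ℂ)) (m - r) *
          ((1 / (2 * ↑Real.pi * I)) * ((c : ℂ) / ((c : ℂ) * τ + (d : ℂ)))) ^ (m - r) *
          Dop^[r] (slash k a b c d f) τ := by
  induction m generalizing τ with
  | zero => simp [risingC_zero]
  | succ n ih =>
    have hσne := den_ne hdet hτ
    have hDm := iter_Dop_diffOn hf n
    have hGdiff : ∀ r : ℕ, DifferentiableAt ℂ (Dop^[r] (slash k a b c d f)) τ := fun r =>
      (iter_Dop_diffOn (slash_diffOn hf hdet k) r).differentiableAt (isOpen_U.mem_nhds hτ)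
    rw [show (k + 2 * ((n + 1 : ℕ) : ℤ)) = (k + 2 * (n : ℤ)) + 2 by push_cast; ring]
    rw [Function.iterate_succ_apply']
    rw [slash_D hDm hdet (k + 2 * (n : ℤ)) hτ]
    have hsum_eq : Dop (slash (k + 2 * (n : ℤ)) a b c d (Dop^[n] f)) τ =
        Dop (fun z => ∑ r ∈ Finset.range (n + 1),
          (n.choose r : ℂ) * risingC ((k : ℂ) + (r : ℂ)) (n - r) *
            ((1 / (2 * ↑Real.pi * I)) * ((c : ℂ) / ((c : ℂ) * z + (d : ℂ)))) ^ (n - r) *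
            Dop^[r] (slash k a b c d f) z) τ := by
      simp only [Dop]
      congr 1
      exact Filter.EventuallyEq.deriv_eq
        (Filter.eventuallyEq_of_mem (isOpen_U.mem_nhds hτ) (fun z hz => ih z hz))
    rw [hsum_eq, ih τ hτ]
    have hDsum : Dop (fun z => ∑ r ∈ Finset.range (n + 1),
          (n.choose r : ℂ) * risingC ((k : ℂ) + (r : ℂ)) (n - r) *
            ((1 / (2 * ↑Real.pi * I)) * ((c : ℂ) / ((c : ℂ) * z + (d : ℂ)))) ^ (n - r) *
            Dop^[r] (slash k a b c d f) z) τ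
        = ∑ r ∈ Finset.range (n + 1), Dop (fun z =>
          (n.choose r : ℂ) * risingC ((k : ℂ) + (r : ℂ)) (n - r) *
            ((1 / (2 * ↑Real.pi * I)) * ((c : ℂ) / ((c : ℂ) * z + (d : ℂ)))) ^ (n - r) *
            Dop^[r] (slash k a b c d f) z) τ := by
      simp only [Dop]
      rw [deriv_fun_sum (fun r _ =>
        (term_hasDerivAt c d hσne (hGdiff r)
          ((n.choose r : ℂ) * risingC ((k : ℂ) + (r : ℂ)) (n - r)) (n - r)).differentiableAt)]
      rw [Finset.mul_sum]
    rw [hDsum]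
    have hterm : ∀ r ∈ Finset.range (n + 1), Dop (fun z =>
          (n.choose r : ℂ) * risingC ((k : ℂ) + (r : ℂ)) (n - r) *
            ((1 / (2 * ↑Real.pi * I)) * ((c : ℂ) / ((c : ℂ) * z + (d : ℂ)))) ^ (n - r) *
            Dop^[r] (slash k a b c d f) z) τ
        = (n.choose r : ℂ) * risingC ((k : ℂ) + (r : ℂ)) (n - r) * (-(((n - r : ℕ)) : ℂ)) *
            ((1 / (2 * ↑Real.pi * I)) * ((c : ℂ) / ((c : ℂ) * τ + (d : ℂ)))) ^ ((n - r) + 1) *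
            Dop^[r] (slash k a b c d f) τ
          + (n.choose r : ℂ) * risingC ((k : ℂ) + (r : ℂ)) (n - r) *
            ((1 / (2 * ↑Real.pi * I)) * ((c : ℂ) / ((c : ℂ) * τ + (d : ℂ)))) ^ (n - r) *
            Dop^[r + 1] (slash k a b c d f) τ := by
      intro r _
      rw [Dop_term c d hσne (hGdiff r) _ (n - r), Function.iterate_succ_apply']
    rw [Finset.sum_congr rfl hterm]
    rw [Finset.sum_add_distrib, Finset.mul_sum, add_right_comm, ← Finset.sum_add_distrib]
    have h1 : ∑ r ∈ Finset.range (n + 1),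
        ((n.choose r : ℂ) * risingC ((k : ℂ) + (r : ℂ)) (n - r) * (-(((n - r : ℕ)) : ℂ)) *
            ((1 / (2 * ↑Real.pi * I)) * ((c : ℂ) / ((c : ℂ) * τ + (d : ℂ)))) ^ ((n - r) + 1) *
            Dop^[r] (slash k a b c d f) τ
          + ((k + 2 * (n : ℤ) : ℤ) : ℂ) *
              ((1 / (2 * ↑Real.pi * I)) * ((c : ℂ) / ((c : ℂ) * τ + (d : ℂ)))) *
              ((n.choose r : ℂ) * risingC ((k : ℂ) + (r : ℂ)) (n - r) *
                ((1 / (2 * ↑Real.pi * I)) * ((c : ℂ) / ((c : ℂ) * τ + (d : ℂ)))) ^ (n - r) *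
                Dop^[r] (slash k a b c d f) τ))
        = ∑ r ∈ Finset.range (n + 1),
          (n.choose r : ℂ) * risingC ((k : ℂ) + (r : ℂ)) (n - r) *
            (((k : ℂ) + 2 * (n : ℂ)) - (((n - r : ℕ)) : ℂ)) *
            ((1 / (2 * ↑Real.pi * I)) * ((c : ℂ) / ((c : ℂ) * τ + (d : ℂ)))) ^ ((n - r) + 1) *
            Dop^[r] (slash k a b c d f) τ := by
      refine Finset.sum_congr rfl fun r _ => ?_
      push_cast
      ring
    rw [h1]
    exact comb _ _ _ n
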